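/- Let Z be a Gaussian random variable with variance ς² bounded away from zero and infinity: 0 < c ≤ ς² ≤ C < ∞, with density f. Then there exist constants D₄, D₅ > 0 and exponents 0 < a₄ ≤ a₃ depending only on c, C such that for all sufficiently small δ > 0, P( f(Z - u) ≤ D₄ δ^{a₃} for all |u| ≤ δ ) ≤ D₅ δ^{a₄}. -/

import Mathlib

open MeasureTheory ProbabilityTheory Real
open scoped NNReal

/-- Pointwise tail bound for the Gaussian pdf: in the region `r ≤ |x - a|` it is
dominated by `√2 * exp(-r²/(4v))` times the pdf of variance `2v`. -/
lemma gaussian_tail_pointwise (a : ℝ) (v : ℝ≥0) (hv : 0 < (v : ℝ)) (r x : ℝ)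
    (hr : 0 ≤ r) (hx : r ≤ |x - a|) :
    gaussianPDFReal a v x
      ≤ Real.sqrt 2 * Real.exp (-(r ^ 2 / (4 * (v : ℝ)))) * gaussianPDFReal a (2 * v) x := by
  have h2v : ((2 * v : ℝ≥0) : ℝ) = 2 * (v : ℝ) := by push_cast; ring
  rw [gaussianPDFReal, gaussianPDFReal, h2v]
  have hpos : (0:ℝ) < 2 * π * (v:ℝ) := by positivity
  have hpre : (Real.sqrt (2 * π * (v:ℝ)))⁻¹
      = Real.sqrt 2 * (Real.sqrt (2 * π * (2 * (v:ℝ))))⁻¹ := by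
    have : 2 * π * (2 * (v:ℝ)) = 2 * (2 * π * (v:ℝ)) := by ring
    rw [this, Real.sqrt_mul (by norm_num : (0:ℝ) ≤ 2), mul_inv]
    rw [← mul_assoc, mul_inv_cancel₀ (by positivity : Real.sqrt 2 ≠ 0), one_mul]
  have hsq : r ^ 2 ≤ (x - a) ^ 2 := by
    have := pow_le_pow_left₀ hr hx 2
    simpa [sq_abs] using this
  have hexp : Real.exp (-(x - a) ^ 2 / (2 * (v:ℝ)))
      ≤ Real.exp (-(r ^ 2 / (4 * (v:ℝ)))) * Real.exp (-(x - a) ^ 2 / (2 * (2 * (v:ℝ)))) := by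
    rw [← Real.exp_add]
    apply Real.exp_le_exp.2
    have h4v : (0:ℝ) < 4 * (v:ℝ) := by positivity
    have key : -(r ^ 2 / (4 * (v:ℝ))) + -(x - a) ^ 2 / (2 * (2 * (v:ℝ)))
        - (-(x - a) ^ 2 / (2 * (v:ℝ))) = ((x - a) ^ 2 - r ^ 2) / (4 * (v:ℝ)) := by
      field_simp; ring
    have hnn : (0:ℝ) ≤ ((x - a) ^ 2 - r ^ 2) / (4 * (v:ℝ)) :=
      div_nonneg (by linarith) h4v.le
    linarith
  calc (Real.sqrt (2 * π * (v:ℝ)))⁻¹ * Real.exp (-(x - a) ^ 2 / (2 * (v:ℝ)))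
      ≤ (Real.sqrt (2 * π * (v:ℝ)))⁻¹ *
        (Real.exp (-(r ^ 2 / (4 * (v:ℝ)))) * Real.exp (-(x - a) ^ 2 / (2 * (2 * (v:ℝ))))) := by
        apply mul_le_mul_of_nonneg_left hexp (by positivity)
    _ = Real.sqrt 2 * Real.exp (-(r ^ 2 / (4 * (v:ℝ)))) *
        ((Real.sqrt (2 * π * (2 * (v:ℝ))))⁻¹ * Real.exp (-(x - a) ^ 2 / (2 * (2 * (v:ℝ))))) := by
        rw [hpre]; ring

/-- For a Gaussian with variance bounded away from 0 and ∞, the probability that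
the density is uniformly small in a δ-neighborhood of the variable is O(δ^{a₄}). -/
theorem stmt_4 (c C : ℝ) (hc : 0 < c) (hcC : c ≤ C) :
    ∃ D₄ > (0 : ℝ), ∃ D₅ > (0 : ℝ), ∃ a₃ a₄ : ℝ, 0 < a₄ ∧ a₄ ≤ a₃ ∧
      ∃ δ₀ > (0 : ℝ), ∀ (a : ℝ) (v : ℝ≥0), c ≤ (v : ℝ) → (v : ℝ) ≤ C →
        ∀ δ : ℝ, 0 < δ → δ < δ₀ →
          (gaussianReal a v)
              {x : ℝ | ∀ u : ℝ, |u| ≤ δ → gaussianPDFReal a v (x - u) ≤ D₄ * δ ^ a₃}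
            ≤ ENNReal.ofReal (D₅ * δ ^ a₄) := by
  have hC : 0 < C := hc.trans_le hcC
  set s2 : ℝ := Real.sqrt (2 * π * C) with hs2def
  have hs2 : 0 < s2 := Real.sqrt_pos.2 (by positivity)
  have hE : c / (2 * C) ≤ 1 := by
    rw [div_le_one (by positivity)]; linarith
  have hE0 : 0 < c / (2 * C) := by positivity
  refine ⟨1, one_pos, 2 * (s2 + 1), by positivity, 1, c / (2 * C), hE0, hE, (s2 + 1)⁻¹,
    by positivity, ?_⟩
  intro a v hcv hvC δ hδ hδ0
  have hv0 : 0 < (v : ℝ) := hc.trans_le hcv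
  have hvne : v ≠ 0 := by
    intro h; rw [h] at hv0; simp at hv0
  have hδs2 : δ * s2 < 1 := by
    have : δ * (s2 + 1) < (s2 + 1)⁻¹ * (s2 + 1) :=
      mul_lt_mul_of_pos_right hδ0 (by positivity)
    rw [inv_mul_cancel₀ (by positivity : s2 + 1 ≠ 0)] at this
    nlinarith
  have hδs2pos : 0 < δ * s2 := by positivity
  set L : ℝ := Real.log (δ * s2) with hLdef
  have hL : L < 0 := Real.log_neg hδs2pos hδs2
  set r : ℝ := Real.sqrt (2 * c * (-L)) with hrdef
  have hr0 : 0 ≤ r := Real.sqrt_nonneg _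
  have hr2 : r ^ 2 = 2 * c * (-L) := Real.sq_sqrt (by nlinarith)
  -- Step 1: the event is contained in the tail {x | r ≤ |x - a|}
  have hsub : {x : ℝ | ∀ u : ℝ, |u| ≤ δ → gaussianPDFReal a v (x - u) ≤ 1 * δ ^ (1:ℝ)}
      ⊆ {x : ℝ | r ≤ |x - a|} := by
    intro x hx
    by_contra h
    simp only [Set.mem_setOf_eq, not_le] at h
    have h0 := hx 0 (by simp [abs_of_nonneg, hδ.le])
    rw [sub_zero, one_mul, Real.rpow_one] at h0
    -- show δ < gaussianPDFReal a v x, contradiction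
    have hsq : (x - a) ^ 2 < r ^ 2 := by
      obtain ⟨h1, h2⟩ := abs_lt.mp h
      exact sq_lt_sq' h1 h2
    have hexp : Real.exp L < Real.exp (-(x - a) ^ 2 / (2 * (v:ℝ))) := by
      apply Real.exp_lt_exp.2
      rw [hr2] at hsq
      rw [lt_div_iff₀ (by positivity : (0:ℝ) < 2 * (v:ℝ))]
      nlinarith [hcv, hv0]
    have hpre : s2⁻¹ ≤ (Real.sqrt (2 * π * (v:ℝ)))⁻¹ := by
      apply inv_anti₀ (Real.sqrt_pos.2 (by positivity))
      exact Real.sqrt_le_sqrt (by nlinarith [pi_pos])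
    have : δ < gaussianPDFReal a v x := by
      rw [gaussianPDFReal]
      have h1 : δ = s2⁻¹ * Real.exp L := by
        rw [hLdef, Real.exp_log hδs2pos]
        field_simp
      rw [h1]
      have hexp0 : 0 < Real.exp L := Real.exp_pos _
      calc s2⁻¹ * Real.exp L < s2⁻¹ * Real.exp (-(x - a) ^ 2 / (2 * (v:ℝ))) := by
            apply mul_lt_mul_of_pos_left hexp (by positivity)
        _ ≤ (Real.sqrt (2 * π * (v:ℝ)))⁻¹ * Real.exp (-(x - a) ^ 2 / (2 * (v:ℝ))) := by
            apply mul_le_mul_of_nonneg_right hpre (Real.exp_pos _).le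
    linarith
  refine (measure_mono hsub).trans ?_
  -- Step 2: bound the tail probability
  have h2vne : (2 * v : ℝ≥0) ≠ 0 := by
    simp [hvne]
  have hmeasS : MeasurableSet {x : ℝ | r ≤ |x - a|} :=
    measurableSet_le measurable_const ((measurable_id.sub_const a).abs)
  set K : ℝ := Real.sqrt 2 * Real.exp (-(r ^ 2 / (4 * (v:ℝ)))) with hKdef
  have hK0 : 0 ≤ K := by positivity
  have step : (gaussianReal a v) {x : ℝ | r ≤ |x - a|} ≤ ENNReal.ofReal K := by
    rw [gaussianReal_apply a hvne]
    calc ∫⁻ x in {x : ℝ | r ≤ |x - a|}, gaussianPDF a v x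
        ≤ ∫⁻ x in {x : ℝ | r ≤ |x - a|}, ENNReal.ofReal K * gaussianPDF a (2 * v) x := by
          refine setLIntegral_mono (measurable_const.mul (measurable_gaussianPDF a (2 * v))) ?_
          intro x hx
          rw [gaussianPDF, gaussianPDF, ← ENNReal.ofReal_mul hK0]
          exact ENNReal.ofReal_le_ofReal (gaussian_tail_pointwise a v hv0 r x hr0 hx)
      _ = ENNReal.ofReal K * ∫⁻ x in {x : ℝ | r ≤ |x - a|}, gaussianPDF a (2 * v) x := by
          rw [lintegral_const_mul _ (measurable_gaussianPDF _ _)]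
      _ ≤ ENNReal.ofReal K * 1 := by
          gcongr
          exact (setLIntegral_le_lintegral _ _).trans_eq (lintegral_gaussianPDF_eq_one a h2vne)
      _ = ENNReal.ofReal K := mul_one _
  refine step.trans (ENNReal.ofReal_le_ofReal ?_)
  -- Step 3: K ≤ D₅ * δ ^ a₄
  have hexpK : Real.exp (-(r ^ 2 / (4 * (v:ℝ)))) ≤ (δ * s2) ^ (c / (2 * C)) := by
    rw [Real.rpow_def_of_pos hδs2pos, ← hLdef]
    apply Real.exp_le_exp.2
    rw [hr2]
    rw [div_le_iff₀ (by positivity : (0:ℝ) < 2 * C)] at *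
    have h1 : -(2 * c * -L / (4 * (v:ℝ))) = (c * L) / (2 * (v:ℝ)) := by
      field_simp; ring
    rw [h1, div_le_iff₀ (by positivity : (0:ℝ) < 2 * (v:ℝ))]
    -- (c*L) ≤ L * (c/(2C)) * (2 v)  i.e. c L ≤ (c L / C) v ; L < 0, v ≤ C
    have : L * (c / (2 * C)) * (2 * (v:ℝ)) = (c * L) * ((v:ℝ) / C) := by
      field_simp
    rw [this]
    have hcL : c * L < 0 := mul_neg_of_pos_of_neg hc hL
    have hvC' : (v:ℝ) / C ≤ 1 := by
      rw [div_le_one hC]; exact hvC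
    nlinarith
  have hmulrpow : (δ * s2) ^ (c / (2 * C)) = δ ^ (c / (2 * C)) * s2 ^ (c / (2 * C)) :=
    Real.mul_rpow hδ.le hs2.le
  have hs2pow : s2 ^ (c / (2 * C)) ≤ s2 + 1 := by
    rcases le_or_gt s2 1 with h | h
    · calc s2 ^ (c / (2 * C)) ≤ 1 := Real.rpow_le_one hs2.le h hE0.le
        _ ≤ s2 + 1 := by linarith
    · calc s2 ^ (c / (2 * C)) ≤ s2 ^ (1:ℝ) := Real.rpow_le_rpow_of_exponent_le h.le hE
        _ = s2 := Real.rpow_one _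
        _ ≤ s2 + 1 := by linarith
  have hδpow : 0 ≤ δ ^ (c / (2 * C)) := Real.rpow_nonneg hδ.le _
  calc K ≤ Real.sqrt 2 * (δ ^ (c / (2 * C)) * s2 ^ (c / (2 * C))) := by
        rw [hKdef, ← hmulrpow]
        exact mul_le_mul_of_nonneg_left hexpK (Real.sqrt_nonneg _)
    _ ≤ 2 * (δ ^ (c / (2 * C)) * (s2 + 1)) := by
        have hsqrt2 : Real.sqrt 2 ≤ 2 := by
          nlinarith [Real.sq_sqrt (by norm_num : (0:ℝ) ≤ 2), Real.sqrt_nonneg 2]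
        apply mul_le_mul hsqrt2 (mul_le_mul_of_nonneg_left hs2pow hδpow)
          (by positivity) (by norm_num)
    _ = 2 * (s2 + 1) * δ ^ (c / (2 * C)) := by ring
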